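/- Suppose the local truncation error satisfies |R^j| ≤ C j^{-α-1} for all 1 ≤ j ≤ n, with 0 < α ≤ 1/2. Then ∑_{j=1}^{n} P_{n-j} |R^j| ≤ C' Γ(2-α) K_{1+α,n} ρ^α n^{α-1} for some constant C' depending only on C and α, where K_{1+α,n} = 1 + (1 - n^{-α})/α. -/

import Mathlib

open MeasureTheory intervalIntegral Set

noncomputable def s10w (α : ℝ) (k : ℕ) : ℝ := ((k:ℝ)+1)^(1-α) - (k:ℝ)^(1-α)

section aux
variable {α : ℝ} (hα0 : 0 < α) (hα1 : α ≤ 1/2)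

/-- monotone comparison of interval integrals with pointwise bound only on the open interval -/
lemma s10_mono_Ioo {a b : ℝ} {f g : ℝ → ℝ} (hab : a ≤ b)
    (hf : IntervalIntegrable f volume a b) (hg : IntervalIntegrable g volume a b)
    (h : ∀ t ∈ Set.Ioo a b, f t ≤ g t) :
    ∫ t in a..b, f t ≤ ∫ t in a..b, g t := by
  rw [intervalIntegral.integral_of_le hab, intervalIntegral.integral_of_le hab,
    MeasureTheory.integral_Ioc_eq_integral_Ioo, MeasureTheory.integral_Ioc_eq_integral_Ioo]
  apply MeasureTheory.setIntegral_mono_on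
  · exact (hf.1.mono_set Set.Ioo_subset_Ioc_self)
  · exact (hg.1.mono_set Set.Ioo_subset_Ioc_self)
  · exact measurableSet_Ioo
  · exact h

/-- integrability of t ↦ (t-c)^r for r > -1 -/
lemma s10_int_sub_rpow {r : ℝ} (hr : -1 < r) (c a b : ℝ) :
    IntervalIntegrable (fun t => (t - c) ^ r) volume a b := by
  simpa using (intervalIntegral.intervalIntegrable_rpow' hr (a := a - c) (b := b - c)).comp_sub_right c

/-- integrability of t ↦ (c-t)^r for r > -1 -/
lemma s10_int_sub_rpow' {r : ℝ} (hr : -1 < r) (c a b : ℝ) :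
    IntervalIntegrable (fun t => (c - t) ^ r) volume a b := by
  simpa using (intervalIntegral.intervalIntegrable_rpow' hr (a := c - a) (b := c - b)).comp_sub_left c

lemma s10_cont_rpow (r : ℝ) {s : Set ℝ} (hs : ∀ x ∈ s, x ≠ 0) :
    ContinuousOn (fun t : ℝ => t ^ r) s :=
  fun x hx => (Real.continuousAt_rpow_const x r (Or.inl (hs x hx))).continuousWithinAt

lemma s10_cont_sub_rpow (r c : ℝ) {s : Set ℝ} (hs : ∀ x ∈ s, c - x ≠ 0) :
    ContinuousOn (fun t : ℝ => (c - t) ^ r) s := by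
  apply ContinuousOn.comp (s10_cont_rpow r (s := (fun t => c - t) '' s) ?_)
    (continuous_const.sub continuous_id).continuousOn (Set.mapsTo_image _ s)
  rintro x ⟨y, hy, rfl⟩; exact hs y hy

include hα0 hα1 in
lemma s10_w_rep (k : ℕ) : s10w α k = (1-α) * ∫ t in (k:ℝ)..(k:ℝ)+1, t^(-α) := by
  rw [integral_rpow (Or.inl (by linarith))]
  have h1 : (0:ℝ) < 1 - α := by linarith
  have : -α + 1 = 1 - α := by ring
  rw [this, s10w]
  field_simp

include hα0 hα1 in
lemma s10_d_rep {k : ℕ} (hk : 1 ≤ k) :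
    s10w α (k-1) - s10w α k = (1-α) * ∫ t in (k:ℝ)..(k:ℝ)+1, ((t-1)^(-α) - t^(-α)) := by
  have hcast : ((k-1:ℕ):ℝ) = (k:ℝ) - 1 := by
    push_cast [hk]; ring
  have h2 : ∫ t in (k:ℝ)..(k:ℝ)+1, (t-1)^(-α) = ∫ s in ((k:ℝ)-1)..((k:ℝ)-1)+1, s^(-α) := by
    rw [intervalIntegral.integral_comp_sub_right (fun s => s^(-α)) 1]
    norm_num
  rw [intervalIntegral.integral_sub (s10_int_sub_rpow (by linarith) 1 _ _)
      (intervalIntegral.intervalIntegrable_rpow' (by linarith)),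
    mul_sub, ← s10_w_rep hα0 hα1 k, h2]
  congr 1
  rw [s10_w_rep hα0 hα1 (k-1), hcast]

include hα0 in
lemma s10_psi_nonneg {t : ℝ} (ht : 1 < t) : 0 ≤ (t-1)^(-α) - t^(-α) := by
  have := Real.rpow_le_rpow_of_nonpos (x := t - 1) (y := t) (z := -α)
    (by linarith) (by linarith) (by linarith)
  linarith

include hα0 hα1 in
lemma s10_d_nonneg {k : ℕ} (hk : 1 ≤ k) : 0 ≤ s10w α (k-1) - s10w α k := by
  rw [s10_d_rep hα0 hα1 hk]
  have h1 : (0:ℝ) < 1 - α := by linarith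
  apply mul_nonneg (by linarith)
  have h0 : (∫ t in (k:ℝ)..(k:ℝ)+1, (0:ℝ)) ≤ ∫ t in (k:ℝ)..(k:ℝ)+1, ((t-1)^(-α) - t^(-α)) := by
    apply s10_mono_Ioo (by linarith)
      (by simp [_root_.intervalIntegrable_const])
      ((s10_int_sub_rpow (by linarith) 1 _ _).sub
        (intervalIntegral.intervalIntegrable_rpow' (by linarith)))
    intro t ht
    have hk1 : (1:ℝ) ≤ (k:ℝ) := by exact_mod_cast hk
    exact s10_psi_nonneg hα0 (lt_of_le_of_lt hk1 ht.1)
  simpa using h0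

include hα0 hα1 in
lemma s10_w_nonneg (k : ℕ) : 0 ≤ s10w α k := by
  rw [s10_w_rep hα0 hα1 k]
  apply mul_nonneg (by linarith)
  apply intervalIntegral.integral_nonneg (by linarith)
  intro u hu
  exact Real.rpow_nonneg (le_trans (Nat.cast_nonneg k) hu.1) _

include hα0 hα1 in
lemma s10_w_zero : s10w α 0 = 1 := by
  simp [s10w, Real.zero_rpow (by linarith : 1 - α ≠ 0)]

end aux
section aux2
open MeasureTheory intervalIntegral Set
variable {α : ℝ} (hα0 : 0 < α) (hα1 : α ≤ 1/2)

include hα0 hα1 in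
/-- `(t-1)^(-α) - t^(-α) ≥ α t^(-α-1)` for `t ≥ 2` -/
lemma s10_psi_lower {t : ℝ} (ht : 2 ≤ t) :
    α * t^(-α-1) ≤ (t-1)^(-α) - t^(-α) := by
  have h1 : (0:ℝ) < t - 1 := by linarith
  have hαne : α ≠ 0 := ne_of_gt hα0
  have hne : -α - 1 ≠ -1 := by intro h; apply hαne; linarith
  have hnotin : (0:ℝ) ∉ Set.uIcc (t-1) t := by
    rw [Set.mem_uIcc]; push_neg; constructor <;> intro h <;> linarith
  have hval : ∫ u in (t-1)..t, u^(-α-1) = (t^(-α) - (t-1)^(-α))/(-α) := by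
    rw [integral_rpow (Or.inr ⟨hne, hnotin⟩)]
    norm_num
  have hmono : (t:ℝ)^(-α-1) ≤ ∫ u in (t-1)..t, u^(-α-1) := by
    have h2 : ∫ u in (t-1)..t, t^(-α-1) ≤ ∫ u in (t-1)..t, u^(-α-1) := by
      apply intervalIntegral.integral_mono_on (by linarith)
        (_root_.intervalIntegrable_const)
        (by apply ContinuousOn.intervalIntegrable
            apply s10_cont_rpow
            intro x hx
            rw [Set.uIcc_of_le (by linarith)] at hx
            intro h0; rw [h0] at hx; exact absurd hx.1 (by linarith))
      intro x hx
      exact Real.rpow_le_rpow_of_nonpos (by linarith [hx.1]) hx.2 (by linarith)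
    rw [intervalIntegral.integral_const, smul_eq_mul] at h2
    calc t^(-α-1) = (t - (t-1)) * t^(-α-1) := by norm_num
    _ ≤ _ := h2
  have h3 := mul_le_mul_of_nonneg_left hmono (le_of_lt hα0)
  rw [hval] at h3
  have heq : α * ((t^(-α) - (t-1)^(-α))/(-α)) = (t-1)^(-α) - t^(-α) := by
    rw [div_neg, mul_neg, mul_div_assoc', mul_comm, mul_div_assoc, div_self hαne]
    ring
  linarith [h3, heq.symm.le, heq.le]

include hα0 hα1 in
/-- envelope bound: `(N-t)^(α-1) ≤ N^(α-1) + (1-α)(N-1)^(α-2) t` for `0 ≤ t ≤ 1`, `N ≥ 7` -/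
lemma s10_envelope {N t : ℝ} (hN : 7 ≤ N) (h0 : 0 ≤ t) (h1 : t ≤ 1) :
    (N-t)^(α-1) ≤ N^(α-1) + (1-α) * (N-1)^(α-2) * t := by
  have hNt : (0:ℝ) < N - t := by linarith
  have hne : α - 2 ≠ -1 := by intro h; linarith [hα1]
  have hnotin : (0:ℝ) ∉ Set.uIcc (N-t) N := by
    rw [Set.mem_uIcc]; push_neg; constructor <;> intro h <;> linarith
  have hval : ∫ s in (N-t)..N, s^(α-2) = (N^(α-1) - (N-t)^(α-1))/(α-1) := by
    rw [integral_rpow (Or.inr ⟨hne, hnotin⟩)]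
    norm_num [show α - 2 + 1 = α - 1 by ring]
  have hub : ∫ s in (N-t)..N, s^(α-2) ≤ (N-1)^(α-2) * t := by
    have h2 : ∫ s in (N-t)..N, s^(α-2) ≤ ∫ s in (N-t)..N, (N-1)^(α-2) := by
      apply intervalIntegral.integral_mono_on (by linarith)
        (by apply ContinuousOn.intervalIntegrable
            apply s10_cont_rpow
            intro x hx
            rw [Set.uIcc_of_le (by linarith)] at hx
            intro hx0; rw [hx0] at hx; exact absurd hx.1 (by linarith))
        (_root_.intervalIntegrable_const)
      intro x hx
      exact Real.rpow_le_rpow_of_nonpos (by linarith) (by linarith [hx.1]) (by linarith)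
    rw [intervalIntegral.integral_const, smul_eq_mul] at h2
    calc ∫ s in (N-t)..N, s^(α-2) ≤ (N - (N-t)) * (N-1)^(α-2) := h2
    _ = (N-1)^(α-2) * t := by ring
  have hkey : (N-t)^(α-1) = N^(α-1) + (1-α) * ∫ s in (N-t)..N, s^(α-2) := by
    rw [hval]
    have hαne1 : α - 1 ≠ 0 := by intro h; linarith [hα1]
    field_simp
    ring
  rw [hkey]
  have h1α : (0:ℝ) ≤ 1 - α := by linarith
  nlinarith [mul_le_mul_of_nonneg_left hub h1α]

end aux2
section aux3
open MeasureTheory intervalIntegral Set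
variable {α : ℝ} (hα0 : 0 < α) (hα1 : α ≤ 1/2)

lemma s10_sum_Icc (m : ℕ) (f : ℕ → ℝ) :
    ∑ k ∈ Finset.Icc 1 m, f k = ∑ i ∈ Finset.range m, f (1+i) := by
  rw [← Finset.Ico_add_one_right_eq_Icc, Finset.sum_Ico_eq_sum_range]
  simp

lemma s10_trpow (h0 : 0 < α) (h1 : α < 1) {t : ℝ} (ht : 0 ≤ t) : t * t^(-α) = t^(1-α) := by
  rcases eq_or_lt_of_le ht with h | h
  · rw [← h, Real.zero_rpow (by intro hc; nlinarith : (1:ℝ) - α ≠ 0), zero_mul]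
  · rw [show (1:ℝ) - α = 1 + -α by ring, Real.rpow_add h, Real.rpow_one]

include hα0 hα1 in
set_option maxHeartbeats 2000000 in
lemma s10_key (n : ℕ) (hn : 7 ≤ n) :
    ∑ k ∈ Finset.Icc 1 (n-1), (s10w α (k-1) - s10w α k) * ((n:ℝ) - (k:ℝ))^(α-1)
      ≤ (n:ℝ)^(α-1) - (5/216) * (n:ℝ)^(-α-1) := by
  have hα1' : α < 1 := by linarith
  have h1α : (0:ℝ) < 1 - α := by linarith
  set N : ℝ := (n:ℝ) with hNdef
  have hN : (7:ℝ) ≤ N := by rw [hNdef]; exact_mod_cast hn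
  set ψ : ℝ → ℝ := fun t => (t-1)^(-α) - t^(-α) with hψdef
  set g : ℝ → ℝ := fun t => (N - t)^(α-1) * ((t-1)^(-α) - t^(-α)) with hgdef
  set f : ℝ → ℝ := fun t => (N - t)^(α-1) * t^(-α) with hfdef
  set g1 : ℝ → ℝ := fun t => (N - t)^(α-1) * (t-1)^(-α) with hg1def
  -- continuity helpers
  have hcont_NT : ∀ {s : Set ℝ}, (∀ x ∈ s, x ≤ N - 1) → ContinuousOn (fun t : ℝ => (N-t)^(α-1)) s := by
    intro s hs
    apply ContinuousOn.rpow_const (continuous_const.sub continuous_id).continuousOn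
    intro x hx
    left; have := hs x hx; intro h0; simp only [Pi.sub_apply] at h0; rw [sub_eq_zero] at h0; simp only [id_eq] at h0; linarith
  have hcont_T1 : ∀ {s : Set ℝ}, (∀ x ∈ s, 2 ≤ x) → ContinuousOn (fun t : ℝ => (t-1)^(-α)) s := by
    intro s hs
    apply ContinuousOn.rpow_const (continuous_id.sub continuous_const).continuousOn
    intro x hx
    left; have := hs x hx; intro h0; simp only [Pi.sub_apply] at h0; rw [sub_eq_zero] at h0; simp only [id_eq] at h0; linarith
  have hcont_T : ∀ {s : Set ℝ}, (∀ x ∈ s, 1 ≤ x) → ContinuousOn (fun t : ℝ => t^(-α)) s := by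
    intro s hs
    apply ContinuousOn.rpow_const continuousOn_id
    intro x hx
    left; have := hs x hx; intro h0; simp only [id_eq] at h0; rw [h0] at this; linarith
  -- integrability package
  have hint_psi : ∀ a b : ℝ, IntervalIntegrable ψ volume a b := fun a b =>
    (s10_int_sub_rpow (by linarith) 1 a b).sub (intervalIntegral.intervalIntegrable_rpow' (by linarith))
  have hint_NT : ∀ a b : ℝ, IntervalIntegrable (fun t : ℝ => (N-t)^(α-1)) volume a b := fun a b =>
    s10_int_sub_rpow' (by linarith) N a b
  have hint_g1 : IntervalIntegrable g1 volume 1 N := by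
    have p1 : IntervalIntegrable g1 volume 1 2 := by
      apply IntervalIntegrable.continuousOn_mul (s10_int_sub_rpow (by linarith) 1 1 2)
      apply hcont_NT
      intro x hx
      rw [Set.uIcc_of_le (by norm_num)] at hx
      linarith [hx.2]
    have p2 : IntervalIntegrable g1 volume 2 N := by
      apply IntervalIntegrable.mul_continuousOn (hint_NT 2 N)
      apply hcont_T1
      intro x hx
      rw [Set.uIcc_of_le (by linarith)] at hx
      exact hx.1
    exact p1.trans p2
  have hint_f01 : IntervalIntegrable f volume 0 1 := by
    apply IntervalIntegrable.continuousOn_mul (intervalIntegral.intervalIntegrable_rpow' (by linarith))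
    apply hcont_NT
    intro x hx
    rw [Set.uIcc_of_le (by norm_num)] at hx
    linarith [hx.2]
  have hint_f1N : IntervalIntegrable f volume 1 N := by
    apply IntervalIntegrable.mul_continuousOn (hint_NT 1 N)
    apply hcont_T
    intro x hx
    rw [Set.uIcc_of_le (by linarith)] at hx
    exact hx.1
  have hint_g : IntervalIntegrable g volume 1 N := by
    have : g = fun t => g1 t - f t := by
      funext t
      show (N - t)^(α-1) * ((t-1)^(-α) - t^(-α)) = (N - t)^(α-1) * (t-1)^(-α) - (N - t)^(α-1) * t^(-α)
      ring
    rw [this]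
    exact hint_g1.sub hint_f1N
  -- Step C : beta identity
  have hA : ∫ t in (1:ℝ)..N, g1 t = ∫ s in (0:ℝ)..(N-1), (N-1-s)^(α-1) * s^(-α) := by
    have h := intervalIntegral.integral_comp_sub_right
      (a := (1:ℝ)) (b := N) (fun s => (N-1-s)^(α-1) * s^(-α)) 1
    rw [show (1:ℝ) - 1 = 0 by ring] at h
    rw [← h]
    apply intervalIntegral.integral_congr
    intro x _
    show (N - x)^(α-1) * (x-1)^(-α) = (N - 1 - (x-1))^(α-1) * (x-1)^(-α)
    rw [show N - 1 - (x-1) = N - x by ring]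
  have hscale : ∫ t in (0:ℝ)..N, f t = ∫ s in (0:ℝ)..(N-1), (N-1-s)^(α-1) * s^(-α) := by
    have hN1 : (0:ℝ) < N - 1 := by linarith
    set c : ℝ := N/(N-1) with hcdef
    have hcpos : 0 < c := div_pos (by linarith) hN1
    have hc : c ≠ 0 := ne_of_gt hcpos
    have h1 := intervalIntegral.integral_comp_mul_left (a := (0:ℝ)) (b := N-1) f hc
    rw [mul_zero, show c*(N-1) = N by rw [hcdef]; field_simp] at h1
    have h2 : ∀ x ∈ Set.uIcc (0:ℝ) (N-1), f (c*x) = c⁻¹ * ((N-1-x)^(α-1) * x^(-α)) := by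
      intro x hx
      rw [Set.uIcc_of_le (by linarith)] at hx
      have hx0 : 0 ≤ x := hx.1
      have hxN : x ≤ N-1 := hx.2
      have e1 : N - c*x = c * (N-1-x) := by rw [hcdef]; field_simp
      show (N - c*x)^(α-1) * (c*x)^(-α) = _
      rw [e1, Real.mul_rpow hcpos.le (by linarith), Real.mul_rpow hcpos.le hx0]
      have e2 : c^(α-1) * c^(-α) = c⁻¹ := by
        rw [← Real.rpow_add hcpos, show α-1 + -α = -1 by ring, Real.rpow_neg_one]
      calc c^(α-1) * (N-1-x)^(α-1) * (c^(-α) * x^(-α))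
          = (c^(α-1) * c^(-α)) * ((N-1-x)^(α-1) * x^(-α)) := by ring
        _ = c⁻¹ * ((N-1-x)^(α-1) * x^(-α)) := by rw [e2]
    rw [intervalIntegral.integral_congr h2, intervalIntegral.integral_const_mul] at h1
    rw [smul_eq_mul] at h1
    exact (mul_left_cancel₀ (inv_ne_zero hc) h1).symm
  have hsplit0 : ∫ t in (0:ℝ)..N, f t = (∫ t in (0:ℝ)..1, f t) + ∫ t in (1:ℝ)..N, f t :=
    (intervalIntegral.integral_add_adjacent_intervals hint_f01 hint_f1N).symm
  have hBeta : ∫ t in (1:ℝ)..N, g t = ∫ t in (0:ℝ)..1, f t := by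
    have hgs : ∫ t in (1:ℝ)..N, g t = (∫ t in (1:ℝ)..N, g1 t) - ∫ t in (1:ℝ)..N, f t := by
      rw [← intervalIntegral.integral_sub hint_g1 hint_f1N]
      apply intervalIntegral.integral_congr
      intro x _
      show (N - x)^(α-1) * ((x-1)^(-α) - x^(-α)) = (N - x)^(α-1) * (x-1)^(-α) - (N - x)^(α-1) * x^(-α)
      ring
    rw [hgs, hA, ← hscale, hsplit0]
    ring
  -- Step B : sum of integrals
  have hsum : ∑ k ∈ Finset.Icc 1 (n-1), ∫ t in ((k:ℕ):ℝ)..((k:ℕ):ℝ)+1, g t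
      = ∫ t in (1:ℝ)..N, g t := by
    rw [s10_sum_Icc]
    have hadj := intervalIntegral.sum_integral_adjacent_intervals
      (a := fun i : ℕ => (i:ℝ)+1) (n := n-1) (f := g) (μ := volume) ?_
    · have ha0 : ((0:ℕ):ℝ)+1 = 1 := by norm_num
      have haN : ((n-1:ℕ):ℝ)+1 = N := by
        push_cast [show 1 ≤ n by omega]
        ring
      rw [ha0, haN] at hadj
      rw [← hadj]
      apply Finset.sum_congr rfl
      intro i _
      have c1 : ((1+i:ℕ):ℝ) = (i:ℝ)+1 := by push_cast; ring
      rw [c1, show ((i+1:ℕ):ℝ) = (i:ℝ)+1 from by push_cast; ring]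
    · intro k hk
      apply hint_g.mono_set
      show Set.uIcc ((k:ℝ)+1) (((k+1:ℕ):ℝ)+1) ⊆ Set.uIcc 1 N
      rw [show ((k+1:ℕ):ℝ) = (k:ℝ)+1 from by push_cast; ring]
      have hk0 : (0:ℝ) ≤ (k:ℝ) := Nat.cast_nonneg k
      have hkN : (k:ℝ)+1+1 ≤ N := by
        rw [hNdef]
        have : (k:ℝ) ≤ (n:ℝ) - 2 := by
          have h2 : (k:ℕ) ≤ n - 2 := by omega
          have := (Nat.cast_le (α := ℝ)).mpr h2
          push_cast [show 2 ≤ n by omega] at this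
          linarith
        linarith
      rw [Set.uIcc_of_le (by linarith), Set.uIcc_of_le (by linarith)]
      apply Set.Icc_subset_Icc <;> linarith
  -- Step A : per-interval comparisons
  have hpiece : ∀ k ∈ Finset.Icc 1 (n-2), (s10w α (k-1) - s10w α k) * (N - (k:ℝ))^(α-1)
      ≤ (1-α) * ∫ t in ((k:ℕ):ℝ)..((k:ℕ):ℝ)+1, g t := by
    intro k hk
    obtain ⟨hk1, hk2⟩ := Finset.mem_Icc.mp hk
    have hk1R : (1:ℝ) ≤ (k:ℝ) := by exact_mod_cast hk1
    have hk2R : (k:ℝ) ≤ N - 2 := by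
      rw [hNdef]
      have := (Nat.cast_le (α := ℝ)).mpr hk2
      push_cast [show 2 ≤ n by omega] at this
      linarith
    rw [s10_d_rep hα0 hα1 hk1]
    rw [mul_comm ((1-α) * _) _, ← mul_assoc]
    rw [mul_comm ((N - (k:ℝ))^(α-1)) (1-α), mul_assoc]
    apply mul_le_mul_of_nonneg_left _ (le_of_lt h1α)
    have heq : (N - (k:ℝ))^(α-1) * ∫ t in ((k:ℕ):ℝ)..((k:ℕ):ℝ)+1, ψ t
        = ∫ t in ((k:ℕ):ℝ)..((k:ℕ):ℝ)+1, (N - (k:ℝ))^(α-1) * ψ t := by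
      rw [intervalIntegral.integral_const_mul]
    rw [heq]
    apply s10_mono_Ioo (by linarith) ((hint_psi _ _).const_mul _)
      (hint_g.mono_set ?_)
    · intro t ht
      obtain ⟨ht1, ht2⟩ := ht
      have hψpos : 0 ≤ ψ t := s10_psi_nonneg hα0 (by linarith)
      have hbase : (N - (k:ℝ))^(α-1) ≤ (N - t)^(α-1) :=
        Real.rpow_le_rpow_of_nonpos (by linarith) (by linarith) (by linarith)
      exact mul_le_mul_of_nonneg_right hbase hψpos
    · rw [Set.uIcc_of_le (by linarith), Set.uIcc_of_le (by linarith)]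
      apply Set.Icc_subset_Icc <;> linarith
  -- Step A' : last interval with gain
  have hlast : (s10w α (n-1-1) - s10w α (n-1)) * (N - ((n-1:ℕ):ℝ))^(α-1) + (1-α)^2 * N^(-α-1)
      ≤ (1-α) * ∫ t in (N-1)..N, g t := by
    have hc1 : ((n-1:ℕ):ℝ) = N - 1 := by
      rw [hNdef]; push_cast [show 1 ≤ n by omega]; ring
    rw [hc1, show N - (N-1) = 1 by ring, Real.one_rpow, mul_one]
    have hdr := s10_d_rep hα0 hα1 (k := n-1) (by omega)
    rw [hc1, show N-1+1 = N by ring] at hdr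
    rw [hdr]
    -- gain inequality
    have hIeq : ∫ t in (N-1)..N, ((N-t)^(α-1) - 1) = 1/α - 1 := by
      rw [intervalIntegral.integral_sub (hint_NT _ _) intervalIntegrable_const]
      have hrefl := intervalIntegral.integral_comp_sub_left
        (a := N-1) (b := N) (fun s : ℝ => s^(α-1)) N
      rw [show N - N = 0 by ring, show N - (N-1) = 1 by ring] at hrefl
      rw [hrefl, integral_rpow (Or.inl (by linarith)),
        show α - 1 + 1 = α by ring, Real.one_rpow,
        Real.zero_rpow (ne_of_gt hα0), intervalIntegral.integral_const, smul_eq_mul]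
      field_simp
      ring
    have hgain : (1-α) * N^(-α-1) ≤ ∫ t in (N-1)..N, (g t - ψ t) := by
      have hintsub : IntervalIntegrable (fun t => g t - ψ t) volume (N-1) N :=
        (hint_g.mono_set (by
          rw [Set.uIcc_of_le (by linarith), Set.uIcc_of_le (by linarith)]
          apply Set.Icc_subset_Icc <;> linarith)).sub (hint_psi _ _)
      have hlb : ∫ t in (N-1)..N, (α * N^(-α-1)) * ((N-t)^(α-1) - 1)
          ≤ ∫ t in (N-1)..N, (g t - ψ t) := by
        apply s10_mono_Ioo (by linarith)
          (((hint_NT _ _).sub intervalIntegrable_const).const_mul _) hintsub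
        intro t ht
        obtain ⟨ht1, ht2⟩ := ht
        have hfac : (1:ℝ) ≤ (N-t)^(α-1) :=
          Real.one_le_rpow_of_pos_of_le_one_of_nonpos (by linarith) (by linarith) (by linarith)
        have hψlb : α * N^(-α-1) ≤ ψ t := by
          show α * N^(-α-1) ≤ (t-1)^(-α) - t^(-α)
          have h1 := s10_psi_lower hα0 hα1 (t := t) (by linarith)
          have h2 : N^(-α-1) ≤ t^(-α-1) :=
            Real.rpow_le_rpow_of_nonpos (by linarith) (by linarith) (by linarith)
          have := mul_le_mul_of_nonneg_left h2 (le_of_lt hα0)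
          linarith
        have hexp : g t - ψ t = ((N-t)^(α-1) - 1) * ψ t := by
          show (N - t)^(α-1) * ((t-1)^(-α) - t^(-α)) - ((t-1)^(-α) - t^(-α)) = _
          ring
        rw [hexp]
        nlinarith [mul_le_mul_of_nonneg_left hψlb
          (show (0:ℝ) ≤ (N-t)^(α-1) - 1 by linarith)]
      rw [intervalIntegral.integral_const_mul, hIeq] at hlb
      have hNpow : 0 ≤ N^(-α-1) := Real.rpow_nonneg (by linarith) _
      calc (1-α) * N^(-α-1) = (α * N^(-α-1)) * (1/α - 1) := by
            field_simp
        _ ≤ _ := hlb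
    have hsub2 : ∫ t in (N-1)..N, (g t - ψ t)
        = (∫ t in (N-1)..N, g t) - ∫ t in (N-1)..N, ψ t := by
      apply intervalIntegral.integral_sub
        (hint_g.mono_set (by
          rw [Set.uIcc_of_le (by linarith), Set.uIcc_of_le (by linarith)]
          apply Set.Icc_subset_Icc <;> linarith)) (hint_psi _ _)
    rw [hsub2] at hgain
    nlinarith [hgain, h1α.le]
  -- Step D : loss bound
  have hD : (1-α) * ∫ t in (0:ℝ)..1, f t ≤ N^(α-1) + (1-α)^2 * (N-1)^(α-2)/(2-α) := by
    have hmono2 : ∫ t in (0:ℝ)..1, f t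
        ≤ ∫ t in (0:ℝ)..1, (N^(α-1) * t^(-α) + ((1-α)*(N-1)^(α-2)) * t^(1-α)) := by
      apply intervalIntegral.integral_mono_on (by norm_num) hint_f01
        (((intervalIntegral.intervalIntegrable_rpow' (r := -α) (by linarith)).const_mul (N^(α-1))).add
         ((intervalIntegral.intervalIntegrable_rpow' (r := 1-α) (by linarith)).const_mul ((1-α)*(N-1)^(α-2))))
      intro t ht
      obtain ⟨ht0, ht1⟩ := ht
      have henv := s10_envelope hα0 hα1 hN ht0 ht1
      have htα : 0 ≤ t^(-α) := Real.rpow_nonneg ht0 _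
      have h3 := mul_le_mul_of_nonneg_right henv htα
      have ht2 : t * t^(-α) = t^(1-α) := s10_trpow hα0 hα1' ht0
      calc f t = (N-t)^(α-1) * t^(-α) := rfl
        _ ≤ (N^(α-1) + (1-α)*(N-1)^(α-2)*t) * t^(-α) := h3
        _ = N^(α-1) * t^(-α) + ((1-α)*(N-1)^(α-2)) * (t * t^(-α)) := by ring
        _ = N^(α-1) * t^(-α) + ((1-α)*(N-1)^(α-2)) * t^(1-α) := by rw [ht2]
    have hval1 : ∫ t in (0:ℝ)..1, t^(-α) = 1/(1-α) := by
      rw [integral_rpow (Or.inl (by linarith : (-1:ℝ) < -α))]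
      rw [Real.one_rpow, Real.zero_rpow (show -α+1 ≠ 0 by intro hc; linarith),
        show -α + 1 = 1 - α by ring]
      norm_num
    have hval2 : ∫ t in (0:ℝ)..1, t^(1-α) = 1/(2-α) := by
      rw [integral_rpow (Or.inl (by linarith : (-1:ℝ) < 1-α))]
      rw [Real.one_rpow, Real.zero_rpow (show 1-α+1 ≠ 0 by intro hc; linarith),
        show 1-α + 1 = 2 - α by ring]
      norm_num
    have hrhs : ∫ t in (0:ℝ)..1, (N^(α-1) * t^(-α) + ((1-α)*(N-1)^(α-2)) * t^(1-α))
        = N^(α-1)/(1-α) + (1-α)*(N-1)^(α-2)/(2-α) := by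
      rw [intervalIntegral.integral_add
        (((intervalIntegral.intervalIntegrable_rpow' (r := -α) (by linarith))).const_mul (N^(α-1)))
        (((intervalIntegral.intervalIntegrable_rpow' (r := 1-α) (by linarith))).const_mul ((1-α)*(N-1)^(α-2)))]
      rw [intervalIntegral.integral_const_mul, intervalIntegral.integral_const_mul, hval1, hval2]
      ring
    have h4 := mul_le_mul_of_nonneg_left (hmono2.trans_eq hrhs) h1α.le
    calc (1-α) * ∫ t in (0:ℝ)..1, f t
        ≤ (1-α) * (N^(α-1)/(1-α) + (1-α)*(N-1)^(α-2)/(2-α)) := h4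
      _ = N^(α-1) + (1-α)^2 * (N-1)^(α-2)/(2-α) := by
          field_simp
  -- claim 5 : numeric comparison
  have h5 : (1-α)^2 * (N-1)^(α-2)/(2-α) ≤ (49/54) * ((1-α)^2 * N^(-α-1)) := by
    have hNpos : (0:ℝ) < N := by linarith
    have hA1 : (N-1)^(α-2) ≤ (6/7*N)^(α-2) :=
      Real.rpow_le_rpow_of_nonpos (by linarith) (by linarith) (by linarith)
    have hA2 : (6/7*N)^(α-2) = (6/7:ℝ)^(α-2) * N^(α-2) :=
      Real.mul_rpow (by norm_num) hNpos.le
    have hA3 : (6/7:ℝ)^(α-2) ≤ (6/7:ℝ)^(-2:ℝ) :=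
      Real.rpow_le_rpow_of_exponent_ge (by norm_num) (by norm_num) (by linarith)
    have hA4 : (6/7:ℝ)^(-2:ℝ) = 49/36 := by
      rw [show (-2:ℝ) = ((-2:ℤ):ℝ) by norm_num, Real.rpow_intCast]
      norm_num
    have hA5 : N^(α-2) ≤ N^(-α-1) :=
      Real.rpow_le_rpow_of_exponent_le (by linarith) (by linarith)
    have hNα2 : 0 ≤ N^(α-2) := Real.rpow_nonneg hNpos.le _
    have hchain : (N-1)^(α-2) ≤ (49/36) * N^(-α-1) := by
      calc (N-1)^(α-2) ≤ (6/7:ℝ)^(α-2) * N^(α-2) := by rw [← hA2]; exact hA1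
        _ ≤ (49/36) * N^(α-2) := by
            apply mul_le_mul_of_nonneg_right _ hNα2
            rw [← hA4]; exact hA3
        _ ≤ (49/36) * N^(-α-1) := by
            apply mul_le_mul_of_nonneg_left hA5 (by norm_num)
    have hsq : 0 ≤ (1-α)^2 := sq_nonneg _
    have h2α : (3/2:ℝ) ≤ 2 - α := by linarith
    have hNexp : 0 ≤ N^(-α-1) := Real.rpow_nonneg hNpos.le _
    rw [div_le_iff₀ (by linarith : (0:ℝ) < 2 - α)]
    nlinarith [mul_le_mul_of_nonneg_left hchain hsq,
      mul_le_mul_of_nonneg_left h2α (mul_nonneg hsq hNexp)]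
  -- assemble
  have hsplitS : ∑ k ∈ Finset.Icc 1 (n-1), (s10w α (k-1) - s10w α k) * (N - (k:ℝ))^(α-1)
      = (∑ k ∈ Finset.Icc 1 (n-2), (s10w α (k-1) - s10w α k) * (N - (k:ℝ))^(α-1))
        + (s10w α (n-1-1) - s10w α (n-1)) * (N - ((n-1:ℕ):ℝ))^(α-1) := by
    have h1 : n - 1 = (n-2) + 1 := by omega
    have h2 := Finset.sum_Icc_succ_top (by omega : 1 ≤ (n-2)+1)
      (fun k => (s10w α (k-1) - s10w α k) * (N - (k:ℝ))^(α-1))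
    rw [← h1] at h2
    exact h2
  have hsplitI : ∑ k ∈ Finset.Icc 1 (n-1), ∫ t in ((k:ℕ):ℝ)..((k:ℕ):ℝ)+1, g t
      = (∑ k ∈ Finset.Icc 1 (n-2), ∫ t in ((k:ℕ):ℝ)..((k:ℕ):ℝ)+1, g t)
        + ∫ t in (N-1)..N, g t := by
    have h1 : n - 1 = (n-2) + 1 := by omega
    have h2 := Finset.sum_Icc_succ_top (by omega : 1 ≤ (n-2)+1)
      (fun k => ∫ t in ((k:ℕ):ℝ)..((k:ℕ):ℝ)+1, g t)
    rw [← h1] at h2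
    have hc1 : ((n-1:ℕ):ℝ) = N - 1 := by
      rw [hNdef]; push_cast [show 1 ≤ n by omega]; ring
    rw [hc1, show N-1+1 = N by ring] at h2
    exact h2
  have hsum_le : ∑ k ∈ Finset.Icc 1 (n-1), (s10w α (k-1) - s10w α k) * (N - (k:ℝ))^(α-1)
      ≤ (1-α) * (∫ t in (1:ℝ)..N, g t) - (1-α)^2 * N^(-α-1) := by
    rw [hsplitS, ← hsum, hsplitI, mul_add, Finset.mul_sum]
    have hs1 : ∑ k ∈ Finset.Icc 1 (n-2), (s10w α (k-1) - s10w α k) * (N - (k:ℝ))^(α-1)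
        ≤ ∑ k ∈ Finset.Icc 1 (n-2), (1-α) * ∫ t in ((k:ℕ):ℝ)..((k:ℕ):ℝ)+1, g t :=
      Finset.sum_le_sum hpiece
    linarith [hlast, hs1]
  have hfinal := hsum_le
  rw [hBeta] at hfinal
  have h14 : (1:ℝ)/4 ≤ (1-α)^2 := by nlinarith
  have hNexp : 0 ≤ N^(-α-1) := Real.rpow_nonneg (by linarith) _
  calc ∑ k ∈ Finset.Icc 1 (n-1), (s10w α (k-1) - s10w α k) * ((n:ℝ) - (k:ℝ))^(α-1)
      ≤ (1-α) * (∫ t in (0:ℝ)..1, f t) - (1-α)^2 * N^(-α-1) := hfinal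
    _ ≤ N^(α-1) + (1-α)^2 * (N-1)^(α-2)/(2-α) - (1-α)^2 * N^(-α-1) := by linarith [hD]
    _ ≤ N^(α-1) + (49/54) * ((1-α)^2 * N^(-α-1)) - (1-α)^2 * N^(-α-1) := by linarith [h5]
    _ = N^(α-1) - (5/54) * ((1-α)^2 * N^(-α-1)) := by ring
    _ ≤ (n:ℝ)^(α-1) - (5/216) * (n:ℝ)^(-α-1) := by
        rw [hNdef]
        nlinarith [h14, hNexp]

end aux3
section aux4
open MeasureTheory Set
variable {α : ℝ} (hα0 : 0 < α) (hα1 : α ≤ 1/2)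
variable {b : ℝ} (hb : 0 < b) {P : ℕ → ℝ} (hP0 : P 0 = b)
variable (hrec : ∀ l : ℕ, P (l+1) = ∑ m ∈ Finset.range (l+1), P m * (s10w α (l-m) - s10w α (l+1-m)))

include hα0 hα1 in
lemma s10_coef_nonneg {l m : ℕ} (hm : m ≤ l) : 0 ≤ s10w α (l-m) - s10w α (l+1-m) := by
  have h1 : l+1-m = (l-m)+1 := by omega
  rw [h1]
  have := s10_d_nonneg hα0 hα1 (k := (l-m)+1) (by omega)
  simpa using this

include hα0 hα1 in
lemma s10_coef_sum (l : ℕ) :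
    ∑ m ∈ Finset.range (l+1), (s10w α (l-m) - s10w α (l+1-m)) = 1 - s10w α (l+1) := by
  have h1 : ∀ m ∈ Finset.range (l+1),
      s10w α (l-m) - s10w α (l+1-m)
        = (fun i => s10w α (l+1-i)) (m+1) - (fun i => s10w α (l+1-i)) m := by
    intro m hm
    have hm' : m ≤ l := by simpa [Nat.lt_succ_iff] using hm
    simp only
    congr 2
    omega
  rw [Finset.sum_congr rfl h1, Finset.sum_range_sub (fun i => s10w α (l+1-i))]
  simp [s10_w_zero hα0 hα1]

include hα0 hα1 hb hP0 hrec in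
lemma s10_P_nonneg : ∀ n, 0 ≤ P n := by
  intro n
  induction n using Nat.strong_induction_on with
  | _ n ih =>
    match n with
    | 0 => rw [hP0]; exact hb.le
    | (l+1) =>
      rw [hrec l]
      apply Finset.sum_nonneg
      intro m hm
      have hm' : m ≤ l := by simpa [Nat.lt_succ_iff] using hm
      exact mul_nonneg (ih m (by omega)) (s10_coef_nonneg hα0 hα1 hm')

include hα0 hα1 hb hP0 hrec in
lemma s10_P_le : ∀ n, P n ≤ b := by
  intro n
  induction n using Nat.strong_induction_on with
  | _ n ih =>
    match n with
    | 0 => rw [hP0]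
    | (l+1) =>
      rw [hrec l]
      have h1 : ∑ m ∈ Finset.range (l+1), P m * (s10w α (l-m) - s10w α (l+1-m))
          ≤ ∑ m ∈ Finset.range (l+1), b * (s10w α (l-m) - s10w α (l+1-m)) := by
        apply Finset.sum_le_sum
        intro m hm
        have hm' : m ≤ l := by simpa [Nat.lt_succ_iff] using hm
        exact mul_le_mul_of_nonneg_right (ih m (by omega)) (s10_coef_nonneg hα0 hα1 hm')
      rw [← Finset.mul_sum, s10_coef_sum hα0 hα1 l] at h1
      have h2 := s10_w_nonneg hα0 hα1 (l+1)
      nlinarith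

/-- triangular double-sum swap -/
lemma s10_swap (n : ℕ) (F : ℕ → ℕ → ℝ) :
    ∑ j ∈ Finset.Icc 1 (n-1), ∑ k ∈ Finset.Icc 1 (n-j), F j k
      = ∑ k ∈ Finset.Icc 1 (n-1), ∑ j ∈ Finset.Icc 1 (n-k), F j k := by
  rw [Finset.sum_sigma', Finset.sum_sigma']
  apply Finset.sum_nbij' (i := fun p : (_ : ℕ) × ℕ => ⟨p.2, p.1⟩)
    (j := fun p : (_ : ℕ) × ℕ => ⟨p.2, p.1⟩)
  · intro p hp
    simp only [Finset.mem_sigma, Finset.mem_Icc] at hp ⊢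
    omega
  · intro p hp
    simp only [Finset.mem_sigma, Finset.mem_Icc] at hp ⊢
    omega
  · intro p _; rfl
  · intro p _; rfl
  · intro p _; rfl

include hα0 hα1 hrec in
lemma s10_rec_Icc (l : ℕ) :
    P (l+1) = ∑ k ∈ Finset.Icc 1 (l+1), (s10w α (k-1) - s10w α k) * P (l+1-k) := by
  rw [hrec l, s10_sum_Icc (l+1) (fun k => (s10w α (k-1) - s10w α k) * P (l+1-k))]
  rw [← Finset.sum_range_reflect (fun m => P m * (s10w α (l-m) - s10w α (l+1-m))) (l+1)]
  apply Finset.sum_congr rfl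
  intro i hi
  have hi' : i ≤ l := by simpa [Nat.lt_succ_iff] using hi
  rw [show l + 1 - 1 - i = l - i by omega, show 1 + i - 1 = i by omega,
    show l - (l - i) = i by omega, show l + 1 - (l - i) = i + 1 by omega,
    show l + 1 - (1 + i) = l - i by omega]
  ring

end aux4
section aux5
open MeasureTheory Set
variable {α : ℝ} (hα0 : 0 < α) (hα1 : α ≤ 1/2)
variable {b : ℝ} (hb : 0 < b) {P : ℕ → ℝ} (hP0 : P 0 = b)
variable (hrec : ∀ l : ℕ, P (l+1) = ∑ m ∈ Finset.range (l+1), P m * (s10w α (l-m) - s10w α (l+1-m)))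

include hα0 hα1 hP0 hrec in
lemma s10_U_rec (m : ℕ) :
    ∑ j ∈ Finset.Icc 1 (m+1), P (m+1-j) * ((j:ℕ):ℝ)^(-α-1)
      = b * (((m+1:ℕ)):ℝ)^(-α-1)
        + ∑ k ∈ Finset.Icc 1 m, (s10w α (k-1) - s10w α k)
            * ∑ j ∈ Finset.Icc 1 (m+1-k), P (m+1-k-j) * ((j:ℕ):ℝ)^(-α-1) := by
  rw [Finset.sum_Icc_succ_top (by omega : 1 ≤ m+1)]
  rw [show m+1-(m+1) = 0 by omega, hP0]
  rw [add_comm (b * _) _]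
  congr 1
  -- expand P (m+1-j) for 1 ≤ j ≤ m
  have hexp : ∀ j ∈ Finset.Icc 1 m,
      P (m+1-j) * ((j:ℕ):ℝ)^(-α-1)
        = ∑ k ∈ Finset.Icc 1 (m+1-j), (s10w α (k-1) - s10w α k) * P (m+1-j-k) * ((j:ℕ):ℝ)^(-α-1) := by
    intro j hj
    obtain ⟨hj1, hj2⟩ := Finset.mem_Icc.mp hj
    have h1 : m+1-j = (m-j)+1 := by omega
    rw [h1, s10_rec_Icc hα0 hα1 hrec (m-j), Finset.sum_mul]
  rw [Finset.sum_congr rfl hexp]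
  have hswap := s10_swap (m+1)
    (fun j k => (s10w α (k-1) - s10w α k) * P (m+1-j-k) * ((j:ℕ):ℝ)^(-α-1))
  rw [show m+1-1 = m by omega] at hswap
  rw [hswap]
  apply Finset.sum_congr rfl
  intro k hk
  rw [Finset.mul_sum]
  apply Finset.sum_congr rfl
  intro j hj
  rw [show m+1-j-k = m+1-k-j by omega]
  ring

include hα0 hα1 hb hP0 hrec in
lemma s10_U_bound : ∀ n : ℕ, 1 ≤ n →
    ∑ j ∈ Finset.Icc 1 n, P (n-j) * ((j:ℕ):ℝ)^(-α-1)
      ≤ (100*(1+1/α)) * b * (n:ℝ)^(α-1) := by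
  have hc300 : 300 ≤ 100*(1+1/α) := by
    have h2 : (2:ℝ) ≤ 1/α := by
      rw [le_div_iff₀ hα0]; linarith
    linarith
  intro n
  induction n using Nat.strong_induction_on with
  | _ n ih =>
    intro hn1
    by_cases hn6 : n ≤ 6
    · -- crude bound for small n
      have hterm : ∀ j ∈ Finset.Icc 1 n, P (n-j) * ((j:ℕ):ℝ)^(-α-1) ≤ b := by
        intro j hj
        obtain ⟨hj1, _⟩ := Finset.mem_Icc.mp hj
        have hj1R : (1:ℝ) ≤ (j:ℝ) := by exact_mod_cast hj1
        have hR1 : ((j:ℕ):ℝ)^(-α-1) ≤ 1 :=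
          Real.rpow_le_one_of_one_le_of_nonpos hj1R (by linarith)
        have hR0 : 0 ≤ ((j:ℕ):ℝ)^(-α-1) := Real.rpow_nonneg (by linarith) _
        calc P (n-j) * ((j:ℕ):ℝ)^(-α-1)
            ≤ b * 1 := mul_le_mul (s10_P_le hα0 hα1 hb hP0 hrec _) hR1 hR0 hb.le
          _ = b := mul_one b
      have hsum := Finset.sum_le_card_nsmul _ _ b hterm
      rw [Nat.card_Icc, show n+1-1 = n by omega, nsmul_eq_mul] at hsum
      have hn6R : (n:ℝ) ≤ 6 := by exact_mod_cast hn6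
      have hn1R : (1:ℝ) ≤ (n:ℝ) := by exact_mod_cast hn1
      have hp1 : (6:ℝ)^(α-1) ≤ (n:ℝ)^(α-1) :=
        Real.rpow_le_rpow_of_nonpos (by linarith) hn6R (by linarith)
      have hp2 : (6:ℝ)^(-1:ℝ) ≤ (6:ℝ)^(α-1) :=
        Real.rpow_le_rpow_of_exponent_le (by norm_num) (by linarith)
      have hp3 : (6:ℝ)^(-1:ℝ) = 1/6 := by
        rw [Real.rpow_neg_one]; norm_num
      have hp4 : (1:ℝ)/6 ≤ (n:ℝ)^(α-1) := by rw [← hp3]; linarith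
      calc ∑ j ∈ Finset.Icc 1 n, P (n-j) * ((j:ℕ):ℝ)^(-α-1)
          ≤ (n:ℝ) * b := hsum
        _ ≤ 6 * b := by nlinarith
        _ ≤ (100*(1+1/α)) * b * (n:ℝ)^(α-1) := by
            have hq : (50:ℝ) ≤ (100*(1+1/α)) * (n:ℝ)^(α-1) := by
              nlinarith [mul_nonneg (by linarith : (0:ℝ) ≤ 100*(1+1/α)-300)
                (by linarith : (0:ℝ) ≤ (n:ℝ)^(α-1) - 1/6)]
            nlinarith [mul_le_mul_of_nonneg_right hq hb.le]
    · -- main induction step, n ≥ 7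
      have hn7 : 7 ≤ n := by omega
      obtain ⟨m, rfl⟩ : ∃ m, n = m+1 := ⟨n-1, by omega⟩
      rw [s10_U_rec hα0 hα1 hP0 hrec m]
      have hstep : ∀ k ∈ Finset.Icc 1 m,
          (s10w α (k-1) - s10w α k)
              * ∑ j ∈ Finset.Icc 1 (m+1-k), P (m+1-k-j) * ((j:ℕ):ℝ)^(-α-1)
            ≤ (s10w α (k-1) - s10w α k) * ((100*(1+1/α)) * b * (((m+1):ℝ) - (k:ℝ))^(α-1)) := by
        intro k hk
        obtain ⟨hk1, hk2⟩ := Finset.mem_Icc.mp hk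
        apply mul_le_mul_of_nonneg_left _ (s10_d_nonneg hα0 hα1 hk1)
        have hih := ih (m+1-k) (by omega) (by omega)
        have hcast : ((m+1-k:ℕ):ℝ) = ((m+1:ℕ):ℝ) - (k:ℝ) := by
          push_cast [show k ≤ m+1 by omega]
          ring
        rw [hcast] at hih
        calc ∑ j ∈ Finset.Icc 1 (m+1-k), P (m+1-k-j) * ((j:ℕ):ℝ)^(-α-1)
            ≤ (100*(1+1/α)) * b * (((m+1:ℕ):ℝ) - (k:ℝ))^(α-1) := hih
          _ = (100*(1+1/α)) * b * (((m+1):ℝ) - (k:ℝ))^(α-1) := by push_cast; ring_nf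
      have hS := s10_key hα0 hα1 (m+1) hn7
      have hsum2 : ∑ k ∈ Finset.Icc 1 m, (s10w α (k-1) - s10w α k)
            * ((100*(1+1/α)) * b * (((m+1):ℝ) - (k:ℝ))^(α-1))
          = (100*(1+1/α)) * b
            * ∑ k ∈ Finset.Icc 1 m, (s10w α (k-1) - s10w α k) * (((m+1):ℝ) - (k:ℝ))^(α-1) := by
        rw [Finset.mul_sum]
        apply Finset.sum_congr rfl
        intro k _
        ring
      have h1 : ∑ k ∈ Finset.Icc 1 m, (s10w α (k-1) - s10w α k)
            * ∑ j ∈ Finset.Icc 1 (m+1-k), P (m+1-k-j) * ((j:ℕ):ℝ)^(-α-1)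
          ≤ (100*(1+1/α)) * b
            * ∑ k ∈ Finset.Icc 1 m, (s10w α (k-1) - s10w α k) * (((m+1):ℝ) - (k:ℝ))^(α-1) := by
        rw [← hsum2]
        exact Finset.sum_le_sum hstep
      rw [show (m+1) - 1 = m by omega] at hS
      have hScast : ∑ k ∈ Finset.Icc 1 m, (s10w α (k-1) - s10w α k) * (((m+1):ℝ) - (k:ℝ))^(α-1)
          ≤ ((m+1:ℕ):ℝ)^(α-1) - (5/216) * ((m+1:ℕ):ℝ)^(-α-1) := by
        have := hS
        convert this using 3 <;> push_cast <;> ring_nf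
      have hcb : 0 < (100*(1+1/α)) * b := by nlinarith
      have hNexp0 : (0:ℝ) ≤ ((m+1:ℕ):ℝ)^(-α-1) := Real.rpow_nonneg (by positivity) _
      have h2 : (100*(1+1/α)) * b
            * ∑ k ∈ Finset.Icc 1 m, (s10w α (k-1) - s10w α k) * (((m+1):ℝ) - (k:ℝ))^(α-1)
          ≤ (100*(1+1/α)) * b * (((m+1:ℕ):ℝ)^(α-1) - (5/216) * ((m+1:ℕ):ℝ)^(-α-1)) :=
        mul_le_mul_of_nonneg_left hScast hcb.le
      have hfin : b * (((m+1:ℕ)):ℝ)^(-α-1)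
            + (100*(1+1/α)) * b * (((m+1:ℕ):ℝ)^(α-1) - (5/216) * ((m+1:ℕ):ℝ)^(-α-1))
          ≤ (100*(1+1/α)) * b * ((m+1:ℕ):ℝ)^(α-1) := by
        nlinarith [mul_nonneg hb.le hNexp0,
          mul_le_mul_of_nonneg_right hc300 (mul_nonneg hb.le hNexp0)]
      calc b * (((m+1:ℕ)):ℝ)^(-α-1)
            + ∑ k ∈ Finset.Icc 1 m, (s10w α (k-1) - s10w α k)
                * ∑ j ∈ Finset.Icc 1 (m+1-k), P (m+1-k-j) * ((j:ℕ):ℝ)^(-α-1)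
          ≤ b * (((m+1:ℕ)):ℝ)^(-α-1)
            + (100*(1+1/α)) * b * (((m+1:ℕ):ℝ)^(α-1) - (5/216) * ((m+1:ℕ):ℝ)^(-α-1)) := by
            linarith [h1.trans h2]
        _ ≤ (100*(1+1/α)) * b * ((m+1:ℕ):ℝ)^(α-1) := hfin

end aux5
/-- If `|R^j| ≤ C j^{-α-1}` for `1 ≤ j ≤ n`, then
`∑_{j=1}^n P_{n-j} |R^j| ≤ C' Γ(2-α) K_{1+α,n} ρ^α n^{α-1}`. -/
theorem stmt_10 (α C : ℝ) (hα0 : 0 < α) (hα1 : α ≤ 1 / 2) (hC : 0 < C) :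
    ∃ C' : ℝ, 0 < C' ∧
      ∀ (ρ : ℝ), 0 < ρ →
      ∀ (a P R : ℕ → ℝ),
      (∀ k : ℕ, a k = (((k : ℝ) + 1) ^ (1 - α) - (k : ℝ) ^ (1 - α)) /
        (Real.Gamma (2 - α) * ρ ^ α)) →
      P 0 = 1 / a 0 →
      (∀ l : ℕ, P (l + 1) =
        (1 / a 0) * ∑ m ∈ Finset.range (l + 1), P m * (a (l - m) - a (l + 1 - m))) →
      ∀ n : ℕ, 1 ≤ n →
      (∀ j : ℕ, 1 ≤ j → j ≤ n → |R j| ≤ C * (j : ℝ) ^ (-α - 1)) →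
      ∑ j ∈ Finset.Icc 1 n, P (n - j) * |R j|
        ≤ C' * Real.Gamma (2 - α) * (1 + (1 - (n : ℝ) ^ (-α)) / α) *
          ρ ^ α * (n : ℝ) ^ (α - 1) := by
  have hαinv : 0 < 1/α := by positivity
  refine ⟨100*C*(1+1/α), by nlinarith, ?_⟩
  intro ρ hρ a P R ha hP0' hrec' n hn hR
  set b : ℝ := Real.Gamma (2-α) * ρ^α with hbdef
  have hb : 0 < b := mul_pos (Real.Gamma_pos_of_pos (by linarith)) (Real.rpow_pos_of_pos hρ α)
  have ha0 : a 0 = 1/b := by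
    rw [ha 0]
    norm_num
    rw [Real.zero_rpow (show (1:ℝ)-α ≠ 0 by intro h; linarith)]
    norm_num
  have hP0 : P 0 = b := by rw [hP0', ha0, one_div_one_div]
  have hrec : ∀ l : ℕ, P (l+1) = ∑ m ∈ Finset.range (l+1), P m * (s10w α (l-m) - s10w α (l+1-m)) := by
    intro l
    rw [hrec' l, ha0, one_div_one_div, Finset.mul_sum]
    apply Finset.sum_congr rfl
    intro m hm
    rw [ha (l-m), ha (l+1-m)]
    show b * (P m * (s10w α (l-m)/b - s10w α (l+1-m)/b)) = P m * (s10w α (l-m) - s10w α (l+1-m))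
    field_simp
  have hPnn := s10_P_nonneg hα0 hα1 hb hP0 hrec
  have hstep1 : ∑ j ∈ Finset.Icc 1 n, P (n-j) * |R j|
      ≤ C * ∑ j ∈ Finset.Icc 1 n, P (n-j) * ((j:ℕ):ℝ)^(-α-1) := by
    rw [Finset.mul_sum]
    apply Finset.sum_le_sum
    intro j hj
    obtain ⟨hj1, hj2⟩ := Finset.mem_Icc.mp hj
    calc P (n-j) * |R j| ≤ P (n-j) * (C * (j:ℝ)^(-α-1)) :=
          mul_le_mul_of_nonneg_left (hR j hj1 hj2) (hPnn _)
      _ = C * (P (n-j) * (j:ℝ)^(-α-1)) := by ring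
  have hstep2 := s10_U_bound hα0 hα1 hb hP0 hrec n hn
  have hK : 1 ≤ 1 + (1 - (n:ℝ)^(-α))/α := by
    have h1 : ((n:ℝ))^(-α) ≤ 1 :=
      Real.rpow_le_one_of_one_le_of_nonpos (by exact_mod_cast hn) (by linarith)
    have h2 : 0 ≤ (1 - (n:ℝ)^(-α))/α := div_nonneg (by linarith) hα0.le
    linarith
  have hY : (0:ℝ) ≤ (n:ℝ)^(α-1) := Real.rpow_nonneg (by positivity) _
  have hmain : ∑ j ∈ Finset.Icc 1 n, P (n-j) * |R j|
      ≤ (100*C*(1+1/α)) * b * (n:ℝ)^(α-1) := by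
    calc ∑ j ∈ Finset.Icc 1 n, P (n-j) * |R j|
        ≤ C * ∑ j ∈ Finset.Icc 1 n, P (n-j) * ((j:ℕ):ℝ)^(-α-1) := hstep1
      _ ≤ C * ((100*(1+1/α)) * b * (n:ℝ)^(α-1)) := mul_le_mul_of_nonneg_left hstep2 hC.le
      _ = (100*C*(1+1/α)) * b * (n:ℝ)^(α-1) := by ring
  have hCpos : (0:ℝ) < 100*C*(1+1/α) := by nlinarith
  have hfac : (0:ℝ) ≤ (100*C*(1+1/α)) * b * (n:ℝ)^(α-1) := by positivity
  calc ∑ j ∈ Finset.Icc 1 n, P (n-j) * |R j|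
      ≤ (100*C*(1+1/α)) * b * (n:ℝ)^(α-1) := hmain
    _ = ((100*C*(1+1/α)) * b * (n:ℝ)^(α-1)) * 1 := by ring
    _ ≤ ((100*C*(1+1/α)) * b * (n:ℝ)^(α-1)) * (1 + (1 - (n:ℝ)^(-α))/α) :=
        mul_le_mul_of_nonneg_left hK hfac
    _ = 100*C*(1+1/α) * Real.Gamma (2-α) * (1 + (1 - (n:ℝ)^(-α))/α) * ρ^α * (n:ℝ)^(α-1) := by
        rw [hbdef]
        ring
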